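/- There do not exist coprime positive integers a, b with a² + b² a perfect square and b² − 4a² a perfect square (with b² > 4a²). -/

import Mathlib

set_option maxRecDepth 100000

private lemma zmod1 : ∀ x b d : ZMod 32, b^2 = d^2 + 4*(2*x+1)^2 → b^2 = 4 := by decide

private lemma zmod2 : ∀ x c : ZMod 32, c^2 = (2*x+1)^2 + 4 → False := by decide

/-- If `a` is odd, the system has no solutions (mod 32 argument). -/
private lemma oddKill (a b c d : ℤ) (ha : Odd a) (h1 : a^2 + b^2 = c^2)
    (h2 : b^2 - 4*a^2 = d^2) : False := by
  obtain ⟨k, hk⟩ := ha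
  have h2' : b^2 = d^2 + 4*a^2 := by linarith
  have hcast : ((a : ℤ) : ZMod 32) = 2*(k : ZMod 32)+1 := by rw [hk]; push_cast; ring
  have e1 : ((b : ZMod 32))^2 = (d : ZMod 32)^2 + 4*(2*(k : ZMod 32)+1)^2 := by
    have := congrArg (fun z : ℤ => (z : ZMod 32)) h2'
    push_cast at this
    rw [hcast] at this
    exact this
  have e2 : ((c : ZMod 32))^2 = (2*(k : ZMod 32)+1)^2 + ((b:ZMod 32))^2 := by
    have := congrArg (fun z : ℤ => (z : ZMod 32)) h1
    push_cast at this
    rw [hcast] at this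
    exact this.symm
  have hb4 : ((b : ZMod 32))^2 = 4 := zmod1 _ _ _ e1
  rw [hb4] at e2
  rw [add_comm] at e2
  exact zmod2 (k : ZMod 32) (c : ZMod 32) (by rw [e2]; ring)

/-- Build `IsCoprime` from absence of common prime factors. -/
private lemma coprime_of_no_prime (x y : ℤ)
    (h : ∀ p : ℕ, p.Prime → (p:ℤ) ∣ x → (p:ℤ) ∣ y → False) : IsCoprime x y := by
  rw [Int.isCoprime_iff_gcd_eq_one]
  by_contra hg
  rcases Nat.eq_zero_or_pos (Int.gcd x y) with h0 | hpos
  · obtain ⟨hx0, hy0⟩ := Int.gcd_eq_zero_iff.mp h0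
    exact h 2 Nat.prime_two (by simp [hx0]) (by simp [hy0])
  · have hp := Nat.minFac_prime hg
    have hd : ((Int.gcd x y : ℕ) : ℤ) ∣ x := Int.gcd_dvd_left x y
    have hd' : ((Int.gcd x y : ℕ) : ℤ) ∣ y := Int.gcd_dvd_right x y
    have hpd : ((Int.gcd x y).minFac : ℤ) ∣ (Int.gcd x y : ℤ) :=
      Int.natCast_dvd_natCast.mpr (Nat.minFac_dvd _)
    exact h _ hp (hpd.trans hd) (hpd.trans hd')

private lemma no_common_prime (u v : ℤ) (h : IsCoprime u v) (p : ℕ) (hp : p.Prime)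
    (h1 : (p:ℤ) ∣ u) (h2 : (p:ℤ) ∣ v) : False := by
  have hg : Int.gcd u v = 1 := Int.isCoprime_iff_gcd_eq_one.mp h
  have hdg : (p:ℤ) ∣ (Int.gcd u v : ℤ) := Int.dvd_coe_gcd h1 h2
  rw [hg] at hdg
  have : p ∣ 1 := by exact_mod_cast hdg
  exact hp.one_lt.ne' (Nat.dvd_one.mp this)

/-- Coprime positive factors of a square are squares. -/
private lemma pos_sq_of_coprime (x y : ℤ) {z : ℤ} (h : IsCoprime x y) (he : x*y = z^2)
    (hx : 0 < x) (hy : 0 < y) : ∃ u v : ℤ, 0 < u ∧ 0 < v ∧ x = u^2 ∧ y = v^2 := by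
  obtain ⟨u0, hu0⟩ := Int.sq_of_isCoprime h he
  obtain ⟨v0, hv0⟩ := Int.sq_of_isCoprime h.symm (by rw [mul_comm]; exact he)
  have hu : x = u0^2 := by
    rcases hu0 with h' | h'
    · exact h'
    · exfalso; rw [h'] at hx; linarith [sq_nonneg u0]
  have hv : y = v0^2 := by
    rcases hv0 with h' | h'
    · exact h'
    · exfalso; rw [h'] at hy; linarith [sq_nonneg v0]
  refine ⟨|u0|, |v0|, ?_, ?_, by rw [sq_abs]; exact hu, by rw [sq_abs]; exact hv⟩
  · rcases (abs_nonneg u0).lt_or_eq with h' | h'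
    · exact h'
    · exfalso; rw [hu, ← sq_abs, ← h'] at hx; simp at hx
  · rcases (abs_nonneg v0).lt_or_eq with h' | h'
    · exact h'
    · exfalso; rw [hv, ← sq_abs, ← h'] at hy; simp at hy

private lemma sq_eq_sq_pos {x y : ℤ} (hx : 0 < x) (hy : 0 < y) (h : x^2 = y^2) : x = y := by
  have h' : (x - y) * (x + y) = 0 := by linear_combination h
  rcases mul_eq_zero.mp h' with h'' | h''
  · linarith
  · linarith

/-- Core descent step. -/
private lemma descent_core (s t c : ℤ) (hs : 0 < s) (ht : 0 < t) (hst : IsCoprime s t)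
    (hse : Even s) (hto : Odd t) (hc : c^2 = s^4+3*s^2*t^2+t^4)
    (hcop : IsCoprime (2*s^2+3*t^2-2*c) (2*s^2+3*t^2+2*c))
    (hQpos : 0 < 2*s^2+3*t^2+2*c)
    (h5 : (5:ℤ) ∣ (2*s^2+3*t^2-2*c)) :
    ∃ a' b' c' d' : ℤ, 0 < a' ∧ 0 < b' ∧ Int.gcd a' b' = 1 ∧ 4*a'^2 < b'^2 ∧
      a'^2+b'^2 = c'^2 ∧ b'^2 - 4*a'^2 = d'^2 ∧ b' ≤ t := by
  have hPQ : (2*s^2+3*t^2-2*c) * (2*s^2+3*t^2+2*c) = 5 * t^4 := by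
    linear_combination (-4 : ℤ) * hc
  have hPpos : 0 < 2*s^2+3*t^2-2*c := by
    have h5t : (0:ℤ) < (2*s^2+3*t^2-2*c) * (2*s^2+3*t^2+2*c) := by rw [hPQ]; positivity
    rcases mul_pos_iff.mp h5t with h | h
    · exact h.1
    · linarith [h.2]
  obtain ⟨P₂, hP₂⟩ := h5
  have hP₂pos : 0 < P₂ := by linarith [hPpos, hP₂]
  have hP₂Q : P₂ * (2*s^2+3*t^2+2*c) = (t^2)^2 := by
    apply mul_left_cancel₀ (show (5:ℤ) ≠ 0 by norm_num)
    linear_combination hPQ - (2*s^2+3*t^2+2*c) * hP₂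
  have hcop2 : IsCoprime P₂ (2*s^2+3*t^2+2*c) :=
    hcop.of_isCoprime_of_dvd_left ⟨5, by linarith [hP₂]⟩
  obtain ⟨U, V, hU, hV, hPU, hQV⟩ :=
    pos_sq_of_coprime P₂ (2*s^2+3*t^2+2*c) hcop2 hP₂Q hP₂pos hQpos
  have hUV : U * V = t^2 := by
    apply sq_eq_sq_pos (by positivity) (by positivity)
    calc (U*V)^2 = (U^2)*(V^2) := by ring
    _ = P₂ * (2*s^2+3*t^2+2*c) := by rw [← hPU, ← hQV]
    _ = (t^2)^2 := hP₂Q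
  have hcopUV : IsCoprime U V := by
    have h' : IsCoprime (U^2) (V^2) := by rw [← hPU, ← hQV]; exact hcop2
    exact (IsCoprime.pow_iff two_pos two_pos).mp h'
  obtain ⟨u, v, hu, hv, hUu, hVv⟩ := pos_sq_of_coprime U V hcopUV hUV hU hV
  have huv : u * v = t := by
    apply sq_eq_sq_pos (by positivity) ht
    calc (u*v)^2 = (u^2)*(v^2) := by ring
    _ = U * V := by rw [← hUu, ← hVv]
    _ = t^2 := hUV
  have hcopuv : IsCoprime u v := by
    have h' : IsCoprime (u^2) (v^2) := by rw [← hUu, ← hVv]; exact hcopUV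
    exact (IsCoprime.pow_iff two_pos two_pos).mp h'
  have huodd : Odd u := by
    rcases Int.even_or_odd u with ⟨w, hw⟩ | ho
    · exact absurd hto (Int.not_odd_iff_even.mpr ⟨w*v, by rw [← huv, hw]; ring⟩)
    · exact ho
  have hvodd : Odd v := by
    rcases Int.even_or_odd v with ⟨w, hw⟩ | ho
    · exact absurd hto (Int.not_odd_iff_even.mpr ⟨u*w, by rw [← huv, hw]; ring⟩)
    · exact ho
  -- the key equation
  have hkey : (v^2-u^2)*(v^2-5*u^2) = 4*s^2 := by
    have hsum2 : 5*(u^2)^2 + (v^2)^2 = 4*s^2 + 6*t^2 := by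
      have e1 : P₂ = (u^2)^2 := by rw [hPU, hUu]
      have e2 : 2*s^2+3*t^2+2*c = (v^2)^2 := by rw [hQV, hVv]
      linear_combination (-5)*e1 - e2 - hP₂
    have ht2 : t^2 = u^2*v^2 := by rw [← huv]; ring
    linear_combination hsum2 + 6*ht2
  -- divisibility by 8 of v² - u²
  obtain ⟨m, hm⟩ := id huodd
  obtain ⟨n, hn⟩ := id hvodd
  obtain ⟨m', hm'⟩ := Int.even_mul_succ_self m
  obtain ⟨n', hn'⟩ := Int.even_mul_succ_self n
  have hG₁eq : v^2 - u^2 = 4*(2*(n' - m')) := by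
    have e : v^2 - u^2 = 4*(n*(n+1) - m*(m+1)) := by rw [hm, hn]; ring
    rw [e]; linarith [hm', hn']
  have hH₁eq : v^2 - 5*u^2 = 4*(2*(n' - m') - u^2) := by linarith [hG₁eq]
  obtain ⟨s₁, hs₁⟩ := hse
  have hs₁' : s = 2 * s₁ := by linarith [hs₁]
  have hs₁pos : 0 < s₁ := by linarith
  have hGH : (2*(n' - m')) * (2*(n' - m') - u^2) = s₁^2 := by
    apply mul_left_cancel₀ (show (16:ℤ) ≠ 0 by norm_num)
    calc (16:ℤ) * ((2*(n' - m')) * (2*(n' - m') - u^2))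
        = (4*(2*(n' - m'))) * (4*(2*(n' - m') - u^2)) := by ring
    _ = (v^2-u^2)*(v^2-5*u^2) := by rw [← hG₁eq, ← hH₁eq]
    _ = 4*s^2 := hkey
    _ = 16 * s₁^2 := by rw [hs₁']; ring
  have hcopGH : IsCoprime (2*(n' - m')) (2*(n' - m') - u^2) := by
    apply coprime_of_no_prime
    intro p hp hdG hdH
    have hdu2 : (p:ℤ) ∣ u^2 := by
      have e : u^2 = (2*(n' - m')) - (2*(n' - m') - u^2) := by ring
      rw [e]; exact dvd_sub hdG hdH
    have hdu : (p:ℤ) ∣ u := (Nat.prime_iff_prime_int.mp hp).dvd_of_dvd_pow hdu2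
    have hdv2 : (p:ℤ) ∣ v^2 := by
      have e : v^2 = 4*(2*(n' - m') - u^2) + 5*u^2 := by linarith [hH₁eq]
      rw [e]; exact dvd_add (hdH.mul_left 4) (hdu2.mul_left 5)
    have hdv : (p:ℤ) ∣ v := (Nat.prime_iff_prime_int.mp hp).dvd_of_dvd_pow hdv2
    exact no_common_prime u v hcopuv p hp hdu hdv
  obtain ⟨Y0, hY0⟩ := Int.sq_of_isCoprime hcopGH hGH
  obtain ⟨X0, hX0⟩ := Int.sq_of_isCoprime hcopGH.symm (by rw [mul_comm]; exact hGH)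
  have hs₁sq : 0 < s₁^2 := by positivity
  rcases hY0 with hY | hY <;> rcases hX0 with hX | hX
  · -- both positive squares: odd-a solution, kill mod 32
    exfalso
    apply oddKill u (2*Y0) v (2*X0) huodd
    · linear_combination (-1)*hG₁eq - 4*hY
    · linear_combination (-1)*hG₁eq + hH₁eq - 4*hY + 4*hX
  · exfalso
    have e : s₁^2 = -(Y0*X0)^2 := by rw [← hGH, hX, hY]; ring
    linarith [sq_nonneg (Y0*X0)]
  · exfalso
    have e : s₁^2 = -(Y0*X0)^2 := by rw [← hGH, hX, hY]; ring
    linarith [sq_nonneg (Y0*X0)]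
  · -- both negative squares: new smaller solution
    have hY' : u^2 - v^2 = 4*Y0^2 := by linarith [hG₁eq, hY]
    have hX' : 5*u^2 - v^2 = 4*X0^2 := by linarith [hH₁eq, hX]
    have hY0ne : Y0 ≠ 0 := by
      intro h0
      have e : s₁^2 = (Y0*X0)^2 := by rw [← hGH, hX, hY]; ring
      rw [h0] at e
      simp at e
      linarith
    refine ⟨|Y0|, u, |X0|, v, abs_pos.mpr hY0ne, hu, ?_, ?_, ?_, ?_, ?_⟩
    · apply Int.isCoprime_iff_gcd_eq_one.mp
      apply coprime_of_no_prime
      intro p hp hdY hdu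
      have hdv2 : (p:ℤ) ∣ v^2 := by
        have e : v^2 = u^2 - 4*Y0^2 := by linarith [hY']
        rw [e]
        have h1 : (p:ℤ) ∣ u^2 := dvd_pow hdu two_ne_zero
        have h2 : (p:ℤ) ∣ Y0^2 := dvd_pow ((dvd_abs _ _).mp hdY) two_ne_zero
        exact dvd_sub h1 (h2.mul_left 4)
      have hdv : (p:ℤ) ∣ v := (Nat.prime_iff_prime_int.mp hp).dvd_of_dvd_pow hdv2
      exact no_common_prime u v hcopuv p hp hdu hdv
    · rw [sq_abs]
      have hv2 : 0 < v^2 := by positivity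
      linarith [hY']
    · rw [sq_abs, sq_abs]; linarith [hY', hX']
    · rw [sq_abs]; linarith [hY']
    · calc u = u * 1 := by ring
      _ ≤ u * v := mul_le_mul_of_nonneg_left hv hu.le
      _ = t := huv

/-- Descent wrapper. -/
private lemma descent (s t c : ℤ) (hs : 0 < s) (ht : 0 < t) (hst : IsCoprime s t)
    (hse : Even s) (hto : Odd t) (hc0 : 0 ≤ c) (hc : c^2 = s^4+3*s^2*t^2+t^4) :
    ∃ a' b' c' d' : ℤ, 0 < a' ∧ 0 < b' ∧ Int.gcd a' b' = 1 ∧ 4*a'^2 < b'^2 ∧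
      a'^2+b'^2 = c'^2 ∧ b'^2 - 4*a'^2 = d'^2 ∧ b' ≤ t := by
  have hPQ : (2*s^2+3*t^2-2*c) * (2*s^2+3*t^2+2*c) = 5 * t^4 := by
    linear_combination (-4 : ℤ) * hc
  have hQpos : 0 < 2*s^2+3*t^2+2*c := by
    have h1 : 0 < s^2 := by positivity
    have h2 : 0 < t^2 := by positivity
    linarith
  have hPpos : 0 < 2*s^2+3*t^2-2*c := by
    have h5t : (0:ℤ) < (2*s^2+3*t^2-2*c) * (2*s^2+3*t^2+2*c) := by rw [hPQ]; positivity
    rcases mul_pos_iff.mp h5t with h | h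
    · exact h.1
    · linarith [h.2]
  obtain ⟨z, hz⟩ := id hto
  have hcop : IsCoprime (2*s^2+3*t^2-2*c) (2*s^2+3*t^2+2*c) := by
    apply coprime_of_no_prime
    intro p hp hdP hdQ
    have hPodd : Odd (2*s^2+3*t^2-2*c) :=
      ⟨s^2 + 6*z^2 + 6*z + 1 - c, by rw [hz]; ring⟩
    have hpodd : p ≠ 2 := by
      intro h2
      subst h2
      exact (Int.not_odd_iff_even.mpr ((even_iff_two_dvd).mpr hdP)) hPodd
    have hdc : (p:ℤ) ∣ c := by
      have h4c : (p:ℤ) ∣ 4*c := by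
        have e : 4*c = (2*s^2+3*t^2+2*c) - (2*s^2+3*t^2-2*c) := by ring
        rw [e]; exact dvd_sub hdQ hdP
      rcases ((Nat.prime_iff_prime_int.mp hp).dvd_mul).mp h4c with h4 | hc'
      · exfalso
        have h4n : p ∣ 4 := by exact_mod_cast h4
        have hp2 : p ∣ 2 := hp.dvd_of_dvd_pow (n := 2) (by simpa using h4n)
        exact hpodd ((Nat.prime_dvd_prime_iff_eq hp Nat.prime_two).mp hp2)
      · exact hc'
    have hdt : (p:ℤ) ∣ t := by
      have hd5t : (p:ℤ) ∣ 5*t^4 := by rw [← hPQ]; exact hdP.mul_right _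
      rcases ((Nat.prime_iff_prime_int.mp hp).dvd_mul).mp hd5t with h5 | ht4
      · -- p = 5, then 5 ∣ t anyway
        have hp5 : (p:ℕ) = 5 := by
          have : (p:ℕ) ∣ 5 := by exact_mod_cast h5
          exact (Nat.prime_dvd_prime_iff_eq hp (by norm_num)).mp this
        obtain ⟨α, hα⟩ := hdP
        obtain ⟨β, hβ⟩ := hdQ
        have h25 : (25:ℤ) * (α*β) = 5*t^4 := by
          rw [← hPQ, hα, hβ, hp5]; push_cast; ring
        have ht4' : t^4 = 5*(α*β) := by linarith
        have : (p:ℤ) ∣ t^4 := by rw [ht4', hp5]; push_cast; exact Dvd.intro _ rfl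
        exact (Nat.prime_iff_prime_int.mp hp).dvd_of_dvd_pow this
      · exact (Nat.prime_iff_prime_int.mp hp).dvd_of_dvd_pow ht4
    have hds : (p:ℤ) ∣ s := by
      apply (Nat.prime_iff_prime_int.mp hp).dvd_of_dvd_pow (n := 4)
      have e : s^4 = c^2 - 3*s^2*t^2 - t^4 := by linarith [hc]
      rw [e]
      have h1 : (p:ℤ) ∣ c^2 := dvd_pow hdc two_ne_zero
      have h2 : (p:ℤ) ∣ 3*s^2*t^2 := by
        have : (p:ℤ) ∣ t^2 := dvd_pow hdt two_ne_zero
        exact Dvd.dvd.mul_left this _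
      have h3 : (p:ℤ) ∣ t^4 := dvd_pow hdt (by norm_num)
      exact dvd_sub (dvd_sub h1 h2) h3
    exact no_common_prime s t hst p hp hds hdt
  have h5PQ : (5:ℤ) ∣ (2*s^2+3*t^2-2*c) * (2*s^2+3*t^2+2*c) := ⟨t^4, hPQ⟩
  rcases ((by norm_num : Prime (5:ℤ)).dvd_mul).mp h5PQ with h5P | h5Q
  · exact descent_core s t c hs ht hst hse hto hc hcop hQpos h5P
  · have hc' : (-c)^2 = s^4+3*s^2*t^2+t^4 := by rw [neg_pow]; simpa using hc
    have e1 : 2*s^2+3*t^2-2*(-c) = 2*s^2+3*t^2+2*c := by ring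
    have e2 : 2*s^2+3*t^2+2*(-c) = 2*s^2+3*t^2-2*c := by ring
    have hcop' : IsCoprime (2*s^2+3*t^2-2*(-c)) (2*s^2+3*t^2+2*(-c)) := by
      rw [e1, e2]; exact hcop.symm
    have hQpos' : 0 < 2*s^2+3*t^2+2*(-c) := by rw [e2]; exact hPpos
    have h5' : (5:ℤ) ∣ (2*s^2+3*t^2-2*(-c)) := by rw [e1]; exact h5Q
    exact descent_core s t (-c) hs ht hst hse hto hc' hcop' hQpos' h5'

private lemma main_aux : ∀ N : ℕ, ∀ a b c d : ℤ, b.natAbs ≤ N → 0 < a → 0 < b →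
    Int.gcd a b = 1 → 4*a^2 < b^2 → a^2+b^2 = c^2 → b^2-4*a^2 = d^2 → False := by
  intro N
  induction N with
  | zero =>
    intro a b c d hN ha hb _ _ _ _
    omega
  | succ n ih =>
    intro a b c d hN ha hb hgcd hlt hc hd
    rcases Int.even_or_odd a with hae | hao
    swap
    · exact oddKill a b c d hao hc hd
    -- a even, b odd
    have hbodd : Odd b := by
      rcases Int.even_or_odd b with hbe | hbo
      · exfalso
        have h2a : (2:ℤ) ∣ a := (even_iff_two_dvd).mp hae
        have h2b : (2:ℤ) ∣ b := (even_iff_two_dvd).mp hbe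
        have := Int.dvd_coe_gcd h2a h2b
        rw [hgcd] at this
        norm_num at this
      · exact hbo
    have hdodd : Odd d := by
      rcases Int.even_or_odd d with hde | hdo
      · exfalso
        have h1 : Odd (b^2) := hbodd.pow
        have h2 : Even (4*a^2) := ⟨2*a^2, by ring⟩
        have h3 : Odd (b^2 - 4*a^2) := h1.sub_even h2
        rw [hd] at h3
        have h4 : Even (d^2) := (Int.even_pow).mpr ⟨hde, two_ne_zero⟩
        exact (Int.not_odd_iff_even.mpr h4) h3
      · exact hdo
    obtain ⟨p, hp2⟩ := hbodd.add_odd hdodd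
    set q : ℤ := b - p with hq
    have hbpq : b = p + q := by omega
    have hdpq : d = p - q := by omega
    have hpq : p * q = a^2 := by
      apply mul_left_cancel₀ (show (4:ℤ) ≠ 0 by norm_num)
      rw [hbpq, hdpq] at hd
      linear_combination hd
    have hppos : 0 < p ∧ 0 < q := by
      have hpqpos : (0:ℤ) < p * q := by rw [hpq]; positivity
      rcases mul_pos_iff.mp hpqpos with h | h
      · exact h
      · exfalso; linarith [h.1, h.2, hb, hbpq]
    have hcoppq : IsCoprime p q := by
      apply coprime_of_no_prime
      intro r hr hdp hdq
      have hda : (r:ℤ) ∣ a := by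
        apply (Nat.prime_iff_prime_int.mp hr).dvd_of_dvd_pow (n := 2)
        rw [← hpq]; exact hdp.mul_right _
      have hdb : (r:ℤ) ∣ b := by rw [hbpq]; exact dvd_add hdp hdq
      have := Int.dvd_coe_gcd hda hdb
      rw [hgcd] at this
      have : r ∣ 1 := by exact_mod_cast this
      exact hr.one_lt.ne' (Nat.dvd_one.mp this)
    obtain ⟨S, T, hSpos, hTpos, hpS, hqT⟩ :=
      pos_sq_of_coprime p q hcoppq hpq hppos.1 hppos.2
    have hbST : b = S^2 + T^2 := by rw [hbpq, hpS, hqT]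
    have hcopST : IsCoprime S T := by
      have h' : IsCoprime (S^2) (T^2) := by rw [← hpS, ← hqT]; exact hcoppq
      exact (IsCoprime.pow_iff two_pos two_pos).mp h'
    have hST2 : (S*T)^2 = a^2 := by rw [mul_pow, ← hpS, ← hqT, hpq]
    have hSTeven : Even (S*T) := by
      have h1 : Even (a^2) := (Int.even_pow).mpr ⟨hae, two_ne_zero⟩
      rw [← hST2] at h1
      exact (Int.even_pow).mp h1 |>.1
    have hc2 : c^2 = S^4+3*S^2*T^2+T^4 := by
      rw [hbST] at hc
      have ha2 : a^2 = S^2*T^2 := by rw [← hpq, hpS, hqT]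
      linear_combination ha2 - hc
    have hblower : ∀ w : ℤ, 0 < w → (w ≤ S ∨ w ≤ T) → w < b := by
      intro w hw hwle
      have hS1 : 1 ≤ S := hSpos
      have hT1 : 1 ≤ T := hTpos
      have hSS : S ≤ S^2 := le_self_pow₀ hS1 two_ne_zero
      have hTT : T ≤ T^2 := le_self_pow₀ hT1 two_ne_zero
      have hS2 : 0 < S^2 := by positivity
      have hT2 : 0 < T^2 := by positivity
      rcases hwle with h | h
      · linarith [hbST]
      · linarith [hbST]
    have hfinish : ∀ a' b' c' d' : ℤ, 0 < a' → 0 < b' → Int.gcd a' b' = 1 →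
        4*a'^2 < b'^2 → a'^2+b'^2 = c'^2 → b'^2-4*a'^2 = d'^2 → (b' ≤ S ∨ b' ≤ T) → False := by
      intro a' b' c' d' ha' hb' hgcd' hlt' hc' hd' hle
      have hb'b : b' < b := hblower b' hb' hle
      have hN' : b'.natAbs ≤ n := by omega
      exact ih a' b' c' d' hN' ha' hb' hgcd' hlt' hc' hd'
    rcases Int.even_or_odd S with hSe | hSo
    · -- S even, T odd
      have hTodd : Odd T := by
        rcases Int.even_or_odd T with hTe | hTo
        · exact absurd ((even_iff_two_dvd).mp hTe)
            (fun h2T => no_common_prime S T hcopST 2 Nat.prime_two ((even_iff_two_dvd).mp hSe) h2T)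
        · exact hTo
      have hcabs : |c|^2 = S^4+3*S^2*T^2+T^4 := by rw [sq_abs]; exact hc2
      obtain ⟨a', b', c', d', ha', hb', hgcd', hlt', hc', hd', hble⟩ :=
        descent S T |c| hSpos hTpos hcopST hSe hTodd (abs_nonneg c) hcabs
      exact hfinish a' b' c' d' ha' hb' hgcd' hlt' hc' hd' (Or.inr hble)
    · -- S odd, T even
      have hTe : Even T := by
        rcases (Int.even_mul.mp hSTeven) with h | h
        · exact absurd hSo (Int.not_odd_iff_even.mpr h)
        · exact h
      have hcabs : |c|^2 = T^4+3*T^2*S^2+S^4 := by rw [sq_abs]; linear_combination hc2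
      obtain ⟨a', b', c', d', ha', hb', hgcd', hlt', hc', hd', hble⟩ :=
        descent T S |c| hTpos hSpos hcopST.symm hTe hSo (abs_nonneg c) hcabs
      exact hfinish a' b' c' d' ha' hb' hgcd' hlt' hc' hd' (Or.inl hble)

theorem stmt_14 :
    ¬ ∃ a b : ℤ, 0 < a ∧ 0 < b ∧ Int.gcd a b = 1 ∧ 4 * a ^ 2 < b ^ 2 ∧
      (∃ c : ℤ, a ^ 2 + b ^ 2 = c ^ 2) ∧ (∃ d : ℤ, b ^ 2 - 4 * a ^ 2 = d ^ 2) := by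
  rintro ⟨a, b, ha, hb, hgcd, hlt, ⟨c, hc⟩, ⟨d, hd⟩⟩
  exact main_aux b.natAbs a b c d le_rfl ha hb hgcd hlt hc hd
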